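/- DTW under r-simplification does not increase: for all strings X, Y of length at most L over Σ and r ≥ 1, DTW_{μ_τ}(s_r(X), s_r(Y)) ≤ DTW_{μ_τ}(X, Y), where s_r replaces each letter a by its highest ancestor in τ reachable from a via edges of weight ≤ r/4. -/

import Mathlib

open scoped ENNReal

def isStep (p q : ℕ × ℕ) : Prop :=
  (q.1 = p.1 + 1 ∧ q.2 = p.2) ∨ (q.1 = p.1 ∧ q.2 = p.2 + 1) ∨
    (q.1 = p.1 + 1 ∧ q.2 = p.2 + 1)

/-- A warping path for strings of lengths `m`, `n` (1-based grid). -/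
def IsWarpingPath (m n : ℕ) (π : List (ℕ × ℕ)) : Prop :=
  π ≠ [] ∧ π.head? = some (1, 1) ∧ π.getLast? = some (m, n) ∧ π.Chain' isStep

/-- Cost of a path: sum of letter distances over its vertices (1-based indexing). -/
noncomputable def pathCost {α : Type*} [Inhabited α] (d : α → α → ℝ≥0∞)
    (X Y : List α) (π : List (ℕ × ℕ)) : ℝ≥0∞ :=
  (π.map (fun p => d (X.getD (p.1 - 1) default) (Y.getD (p.2 - 1) default))).sum

open Classical in
/-- DTW distance: 0 if both strings empty, otherwise the infimum of warping path costs
(`⊤` when no warping path exists, e.g. exactly one string is empty). -/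
noncomputable def dtw {α : Type*} [Inhabited α] (d : α → α → ℝ≥0∞)
    (X Y : List α) : ℝ≥0∞ :=
  if X = [] ∧ Y = [] then 0
  else ⨅ π : {π : List (ℕ × ℕ) // IsWarpingPath X.length Y.length π},
    pathCost d X Y π.1

open scoped NNReal

/-- Maximum weight among the first `n` edges on the path from `u` towards the root
(the edge above a node `w` has weight `weight w`). -/
noncomputable def upMax {V : Type*} (parent : V → V) (weight : V → ℝ≥0)
    (u : V) (n : ℕ) : ℝ≥0 :=
  (Finset.range n).sup (fun k => weight (parent^[k] u))

/-- The (well-separated) tree metric: the maximum weight of an edge on the shortest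
path between `u` and `v`, expressed as the infimum over common ancestors of the
maximum edge weight on the path through that ancestor. -/
noncomputable def treeDist {V : Type*} (parent : V → V) (weight : V → ℝ≥0)
    (u v : V) : ℝ≥0∞ :=
  ⨅ p : {p : ℕ × ℕ // parent^[p.1] u = parent^[p.2] v},
    ((max (upMax parent weight u p.1.1) (upMax parent weight v p.1.2) : ℝ≥0) : ℝ≥0∞)

section AuxLemmas

variable {V : Type*} (parent : V → V) (weight : V → ℝ≥0)

lemma weight_iter_mono (hmono : ∀ v, weight v ≤ weight (parent v)) (u : V) :
    Monotone fun k => weight (parent^[k] u) := by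
  apply monotone_nat_of_le_succ
  intro k
  rw [Function.iterate_succ_apply']
  exact hmono _

lemma s_unique_aux (root : V) (hroot : parent root = root) (r : ℝ≥0)
    {u v v' : V} {n n' : ℕ} (hle : n ≤ n')
    (h1 : parent^[n] u = v)
    (h3 : v = root ∨ r / 4 < weight v)
    (h1' : parent^[n'] u = v')
    (h2' : ∀ k, k < n' → weight (parent^[k] u) ≤ r / 4) : v = v' := by
  rcases eq_or_lt_of_le hle with h | h
  · subst h; rw [← h1, ← h1']
  · have hw : weight v ≤ r / 4 := by rw [← h1]; exact h2' n h
    have hv : v = root := by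
      rcases h3 with h3 | h3
      · exact h3
      · exact absurd (lt_of_lt_of_le h3 hw) (lt_irrefl _)
    have : parent^[n'] u = root := by
      have : parent^[n' - n + n] u = parent^[n' - n] (parent^[n] u) :=
        Function.iterate_add_apply _ _ _ _
      rw [Nat.sub_add_cancel hle] at this
      rw [this, h1, hv, Function.iterate_fixed hroot]
    rw [hv, ← h1', this]

lemma s_unique (root : V) (hroot : parent root = root) (r : ℝ≥0)
    {u v v' : V} {n n' : ℕ}
    (h1 : parent^[n] u = v) (h2 : ∀ k, k < n → weight (parent^[k] u) ≤ r / 4)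
    (h3 : v = root ∨ r / 4 < weight v)
    (h1' : parent^[n'] u = v') (h2' : ∀ k, k < n' → weight (parent^[k] u) ≤ r / 4)
    (h3' : v' = root ∨ r / 4 < weight v') : v = v' := by
  rcases le_total n n' with h | h
  · exact s_unique_aux parent weight root hroot r h h1 h3 h1' h2'
  · exact (s_unique_aux parent weight root hroot r h h1' h3' h1 h2).symm

lemma treeDist_le_of_eq {a b : V} (h : a = b) (c : ℝ≥0∞) :
    treeDist parent weight a b ≤ c := by
  refine le_trans (le_trans (iInf_le _ ⟨(0, 0), by simp [h]⟩) ?_) (zero_le : (0 : ℝ≥0∞) ≤ c)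
  simp [upMax]

lemma treeDist_s_le (root : V) (hroot : parent root = root)
    (hmono : ∀ v, weight v ≤ weight (parent v)) (r : ℝ≥0) (s : V → V)
    (hs : ∀ a, ∃ n, parent^[n] a = s a ∧
      (∀ k, k < n → weight (parent^[k] a) ≤ r / 4) ∧
      (s a = root ∨ r / 4 < weight (s a)))
    (a b : V) :
    treeDist parent weight (s a) (s b) ≤ treeDist parent weight a b := by
  rw [treeDist]
  refine le_iInf ?_
  rintro ⟨⟨i, j⟩, hp⟩
  simp only
  obtain ⟨na, hna, hwa, hsa⟩ := hs a
  obtain ⟨nb, hnb, hwb, hsb⟩ := hs b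
  by_cases hi : na ≤ i
  · by_cases hj : nb ≤ j
    · -- the common ancestor lies above both simplifications
      have key : parent^[i - na] (s a) = parent^[j - nb] (s b) := by
        rw [← hna, ← hnb, ← Function.iterate_add_apply, ← Function.iterate_add_apply,
          Nat.sub_add_cancel hi, Nat.sub_add_cancel hj]
        exact hp
      refine le_trans (iInf_le _ ⟨(i - na, j - nb), key⟩) ?_
      show ((max (upMax parent weight (s a) (i - na)) (upMax parent weight (s b) (j - nb)) :
        ℝ≥0) : ℝ≥0∞) ≤ _
      rw [ENNReal.coe_le_coe]
      refine max_le_max ?_ ?_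
      · refine Finset.sup_le fun k hk => ?_
        rw [← hna, ← Function.iterate_add_apply]
        refine Finset.le_sup (f := fun k => weight (parent^[k] a)) ?_
        rw [Finset.mem_range] at hk ⊢
        omega
      · refine Finset.sup_le fun k hk => ?_
        rw [← hnb, ← Function.iterate_add_apply]
        refine Finset.le_sup (f := fun k => weight (parent^[k] b)) ?_
        rw [Finset.mem_range] at hk ⊢
        omega
    · -- the common ancestor lies strictly below `s b`: then `s a = s b`
      push_neg at hj
      have hwij : weight (parent^[i] a) ≤ r / 4 := by
        rw [hp]; exact hwb j hj
      have h1' : parent^[i + (nb - j)] a = s b := by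
        rw [add_comm, Function.iterate_add_apply, hp, ← Function.iterate_add_apply,
          Nat.sub_add_cancel (le_of_lt hj), hnb]
      have h2' : ∀ k, k < i + (nb - j) → weight (parent^[k] a) ≤ r / 4 := by
        intro k hk
        rcases lt_or_ge k i with h | h
        · exact le_trans (weight_iter_mono parent weight hmono a (le_of_lt h)) hwij
        · have : parent^[k] a = parent^[k - i + j] b := by
            have : parent^[k - i + i] a = parent^[k - i] (parent^[i] a) :=
              Function.iterate_add_apply _ _ _ _
            rw [Nat.sub_add_cancel h] at this
            rw [this, hp, ← Function.iterate_add_apply]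
          rw [this]
          exact hwb _ (by omega)
      have heq : s a = s b := s_unique parent weight root hroot r hna hwa hsa h1' h2' hsb
      exact treeDist_le_of_eq parent weight heq _
  · -- the common ancestor lies strictly below `s a`: then `s b = s a`
    push_neg at hi
    have hwij : weight (parent^[j] b) ≤ r / 4 := by
      rw [← hp]; exact hwa i hi
    have h1' : parent^[j + (na - i)] b = s a := by
      rw [add_comm, Function.iterate_add_apply, ← hp, ← Function.iterate_add_apply,
        Nat.sub_add_cancel (le_of_lt hi), hna]
    have h2' : ∀ k, k < j + (na - i) → weight (parent^[k] b) ≤ r / 4 := by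
      intro k hk
      rcases lt_or_ge k j with h | h
      · exact le_trans (weight_iter_mono parent weight hmono b (le_of_lt h)) hwij
      · have : parent^[k] b = parent^[k - j + i] a := by
          have : parent^[k - j + j] b = parent^[k - j] (parent^[j] b) :=
            Function.iterate_add_apply _ _ _ _
          rw [Nat.sub_add_cancel h] at this
          rw [this, ← hp, ← Function.iterate_add_apply]
        rw [this]
        exact hwa _ (by omega)
    have heq : s b = s a := s_unique parent weight root hroot r hnb hwb hsb h1' h2' hsa
    exact treeDist_le_of_eq parent weight heq.symm _

lemma isStep_le {p q : ℕ × ℕ} (h : isStep p q) : p.1 ≤ q.1 ∧ p.2 ≤ q.2 := by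
  rcases h with ⟨h1, h2⟩ | ⟨h1, h2⟩ | ⟨h1, h2⟩ <;> omega

lemma chain_le_last : ∀ (π : List (ℕ × ℕ)), π.Chain' isStep →
    ∀ p ∈ π, ∀ q, π.getLast? = some q → p.1 ≤ q.1 ∧ p.2 ≤ q.2
  | [], _, p, hp, _, _ => absurd hp List.not_mem_nil
  | [x], _, p, hp, q, hq => by
      simp at hp hq; subst hp; subst hq; exact ⟨le_refl _, le_refl _⟩
  | x :: y :: t, hc, p, hp, q, hq => by
      have hc' : (y :: t).Chain' isStep := hc.tail
      have hxy : isStep x y := List.isChain_cons_cons.mp hc |>.1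
      have hq' : (y :: t).getLast? = some q := by
        rw [← hq]; exact List.getLast?_cons_cons.symm
      rcases List.mem_cons.mp hp with h | h
      · subst h
        have := chain_le_last (y :: t) hc' y List.mem_cons_self q hq'
        have := isStep_le hxy
        omega
      · exact chain_le_last (y :: t) hc' p h q hq'

lemma warp_mem_le {m n : ℕ} {π : List (ℕ × ℕ)} (h : IsWarpingPath m n π)
    {p : ℕ × ℕ} (hp : p ∈ π) : p.1 ≤ m ∧ p.2 ≤ n := by
  obtain ⟨hne, hhead, hlast, hchain⟩ := h
  exact chain_le_last π hchain p hp (m, n) hlast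

lemma warp_pos {m n : ℕ} {π : List (ℕ × ℕ)} (h : IsWarpingPath m n π) :
    1 ≤ m ∧ 1 ≤ n := by
  obtain ⟨hne, hhead, hlast, hchain⟩ := h
  have : (1, 1) ∈ π := by
    cases π with
    | nil => exact absurd rfl hne
    | cons x t => simp at hhead; subst hhead; exact List.mem_cons_self
  exact chain_le_last π hchain (1, 1) this (m, n) hlast

end AuxLemmas

/-- DTW under the well-separated tree metric does not increase under
`r`-simplification, which replaces each letter `a` by its highest ancestor `s a`
reachable from `a` using only edges of weight `≤ r/4`. -/
theorem dtw_simplification_le {V : Type*} [Inhabited V]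
    (parent : V → V) (weight : V → ℝ≥0) (root : V)
    (hroot : parent root = root) (hreach : ∀ v, ∃ n, parent^[n] v = root)
    (hmono : ∀ v, weight v ≤ weight (parent v))
    (r : ℝ≥0) (hr : 1 ≤ r) (s : V → V)
    (hs : ∀ a, ∃ n, parent^[n] a = s a ∧
      (∀ k, k < n → weight (parent^[k] a) ≤ r / 4) ∧
      (s a = root ∨ r / 4 < weight (s a)))
    (L : ℕ) (X Y : List V) (hX : X.length ≤ L) (hY : Y.length ≤ L) :
    dtw (treeDist parent weight) (X.map s) (Y.map s) ≤
      dtw (treeDist parent weight) X Y := by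
  by_cases h0 : X = [] ∧ Y = []
  · obtain ⟨hx, hy⟩ := h0; subst hx; subst hy; simp [dtw]
  · have h0' : ¬(X.map s = [] ∧ Y.map s = []) := by
      intro ⟨hx, hy⟩
      exact h0 ⟨List.map_eq_nil_iff.mp hx, List.map_eq_nil_iff.mp hy⟩
    rw [dtw, dtw, if_neg h0', if_neg h0]
    refine le_iInf ?_
    rintro ⟨π, hπ⟩
    have hπ' : IsWarpingPath (X.map s).length (Y.map s).length π := by
      simpa [List.length_map] using hπ
    refine le_trans (iInf_le _ ⟨π, hπ'⟩) ?_
    refine List.sum_le_sum ?_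
    intro p hp
    have hb := warp_mem_le hπ hp
    have hpos := warp_pos hπ
    have hi : p.1 - 1 < X.length := by omega
    have hj : p.2 - 1 < Y.length := by omega
    have hi' : p.1 - 1 < (X.map s).length := by simpa using hi
    have hj' : p.2 - 1 < (Y.map s).length := by simpa using hj
    rw [List.getD_eq_getElem _ _ hi', List.getD_eq_getElem _ _ hj',
      List.getD_eq_getElem _ _ hi, List.getD_eq_getElem _ _ hj,
      List.getElem_map, List.getElem_map]
    exact treeDist_s_le parent weight root hroot hmono r s hs _ _
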